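/- Let q ≥ 2 and n ≥ 1 be integers and f, g : ℤ_q^n → ℤ_{2q}. Then C_f(u) + C_g(u) = 0 for all u ∈ ℤ_q^n with u ≠ 0 (i.e., f and g have complementary 2q-nega-autocorrelation) if and only if |N_f(u)|² + |N_g(u)|² = 2 for all u ∈ ℤ_q^n. -/

import Mathlib

open Finset

/-- `ω = e^{πi/q}`, a primitive `2q`-th root of unity. -/
noncomputable def omg (q : ℕ) : ℂ := Complex.exp ((Real.pi : ℂ) * Complex.I / q)

/-- `ξ = e^{2πi/q}`, a primitive `q`-th root of unity. -/
noncomputable def xiq (q : ℕ) : ℂ := Complex.exp (2 * (Real.pi : ℂ) * Complex.I / q)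

/-- The `2q`-nega-Hadamard transform of `f : ℤ_q^n → ℤ_{2q}` at `u ∈ ℤ_q^n`:
`N_f(u) = q^{-n/2} Σ_x ω^{f(x)} ξ^{⟨x̂,û⟩} ω^{Σ_i x̂_i}`. -/
noncomputable def NHT (q n : ℕ) [NeZero q] (f : (Fin n → ZMod q) → ZMod (2 * q))
    (u : Fin n → ZMod q) : ℂ :=
  (Real.sqrt ((q : ℝ) ^ n) : ℂ)⁻¹ *
    ∑ x : Fin n → ZMod q,
      omg q ^ (f x).val * xiq q ^ (∑ i, (x i).val * (u i).val) * omg q ^ (∑ i, (x i).val)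

/-- The `2q`-nega-crosscorrelation of `f, g : ℤ_q^m → ℤ_{2q}` at `u`:
`C_{f,g}(u) = Σ_x ω^{f(x) − g(x+u)} (−1)^{n_q(x̂,û)}`. -/
noncomputable def negaCC (q m : ℕ) [NeZero q]
    (f g : (Fin m → ZMod q) → ZMod (2 * q)) (u : Fin m → ZMod q) : ℂ :=
  ∑ x : Fin m → ZMod q,
    omg q ^ (f x - g (x + u)).val *
      (-1 : ℂ) ^ (Finset.univ.filter (fun i => q ≤ (x i).val + (u i).val)).card

set_option linter.unusedSectionVars false

section Aux

variable (q : ℕ) [NeZero q]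

lemma omg_ne_zero : omg q ≠ 0 := Complex.exp_ne_zero _

lemma qC_ne_zero : (q:ℂ) ≠ 0 := Nat.cast_ne_zero.2 (NeZero.ne q)

lemma omg_pow_q : omg q ^ (q:ℤ) = -1 := by
  rw [omg, ← Complex.exp_int_mul]
  rw [show (q:ℤ) * ((Real.pi:ℂ) * Complex.I / q) = Real.pi * Complex.I by
    push_cast
    rw [mul_div_assoc']
    exact mul_div_cancel_left₀ _ (qC_ne_zero q)]
  exact Complex.exp_pi_mul_I

lemma omg_zpow_eq_one_iff (k : ℤ) : omg q ^ k = 1 ↔ (2*q:ℤ) ∣ k := by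
  rw [omg, ← Complex.exp_int_mul, Complex.exp_eq_one_iff]
  constructor
  · rintro ⟨m, hm⟩
    refine ⟨m, ?_⟩
    have hπ : (Real.pi:ℂ) ≠ 0 := Complex.ofReal_ne_zero.2 Real.pi_ne_zero
    have hI : Complex.I ≠ 0 := Complex.I_ne_zero
    have hqc := qC_ne_zero q
    field_simp at hm
    have h2 : (k:ℂ) * (Real.pi * Complex.I) = (2*q*m) * (Real.pi * Complex.I) := by
      linear_combination (↑Real.pi * Complex.I) * hm
    have := mul_right_cancel₀ (mul_ne_zero hπ hI) h2
    exact_mod_cast this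
  · rintro ⟨m, hm⟩
    refine ⟨m, ?_⟩
    have hqc := qC_ne_zero q
    rw [hm]; push_cast; field_simp

lemma omg_pow_two_q : omg q ^ (2*q:ℤ) = 1 := (omg_zpow_eq_one_iff q _).2 dvd_rfl

lemma omg_zpow_congr {a b : ℤ} (h : (2*q:ℤ) ∣ a - b) : omg q ^ a = omg q ^ b := by
  obtain ⟨m, hm⟩ := h
  have : a = b + (2*q) * m := by linarith
  rw [this, zpow_add₀ (omg_ne_zero q), zpow_mul, omg_pow_two_q, one_zpow, mul_one]

lemma conj_omg_zpow (k : ℤ) : (starRingEnd ℂ) (omg q ^ k) = omg q ^ (-k) := by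
  rw [map_zpow₀]
  have h : (starRingEnd ℂ) (omg q) = (omg q)⁻¹ := by
    rw [omg, ← Complex.exp_conj, ← Complex.exp_neg]
    congr 1
    simp [div_eq_mul_inv]
  rw [h, inv_zpow, ← zpow_neg]

lemma xiq_eq : xiq q = omg q ^ 2 := by
  rw [xiq, omg, ← Complex.exp_nat_mul]
  congr 1; push_cast; ring

lemma coord (a b : ZMod q) :
    (((a+b).val : ℤ)) = a.val + b.val - q * (if q ≤ a.val + b.val then 1 else 0) := by
  have ha := ZMod.val_lt a
  have hb := ZMod.val_lt b
  have hv : (a+b).val = (a.val + b.val) % q := ZMod.val_add a b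
  split_ifs with h
  · have h2 : (a.val + b.val) % q = a.val + b.val - q := by
      rw [Nat.mod_eq_sub_mod h, Nat.mod_eq_of_lt (by omega)]
    rw [hv, h2]; omega
  · rw [hv, Nat.mod_eq_of_lt (by omega)]; push_cast; ring

lemma zpow_sum {α : Type*} (s : Finset α) (a : ℂ) (ha : a ≠ 0) (f : α → ℤ) :
    a ^ (∑ i ∈ s, f i) = ∏ i ∈ s, a ^ (f i) := by
  induction s using Finset.cons_induction with
  | empty => simp
  | cons i s hi ih => rw [Finset.sum_cons, Finset.prod_cons, zpow_add₀ ha, ih]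

lemma sum_val_pow (ζ : ℂ) (hζ : ζ ^ q = 1) :
    ∑ k : ZMod q, ζ ^ (k.val) = if ζ = 1 then (q:ℂ) else 0 := by
  have h1 : ∑ k : ZMod q, ζ ^ (k.val) = ∑ j ∈ Finset.range q, ζ ^ j := by
    refine Finset.sum_nbij' (fun k => k.val) (fun j => (j : ZMod q)) ?_ ?_ ?_ ?_ ?_
    · intro k _; exact Finset.mem_range.2 (ZMod.val_lt k)
    · intro j _; exact Finset.mem_univ _
    · intro k _; simp [ZMod.natCast_val, ZMod.cast_id]
    · intro j hj; exact ZMod.val_cast_of_lt (Finset.mem_range.1 hj)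
    · intro k _; rfl
  rw [h1]
  split_ifs with h
  · simp [h]
  · rw [geom_sum_eq h, hζ, sub_self, zero_div]

-- primitive-root criterion at coordinate level
lemma omg_two_d_eq_one_iff (d : ℤ) (hd : d.natAbs < q) : (omg q ^ (2*d) = 1) ↔ d = 0 := by
  rw [omg_zpow_eq_one_iff]
  constructor
  · rintro ⟨m, hm⟩
    have : d = q * m := by linarith
    rcases eq_or_ne m 0 with rfl | hm0
    · simpa using this
    · exfalso
      have : (q:ℤ) ≤ d.natAbs := by
        rw [this]
        calc (q:ℤ) = q * 1 := by ring
        _ ≤ q * m.natAbs := by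
              have : (1:ℤ) ≤ m.natAbs := by
                have := Int.natAbs_pos.2 hm0; exact_mod_cast this
              exact mul_le_mul_of_nonneg_left this (by positivity)
        _ = (q * m).natAbs := by
              rw [Int.natAbs_mul]; push_cast; simp
      omega
  · rintro rfl; exact ⟨0, by ring⟩

def chiP (q n : ℕ) [NeZero q] (u v : Fin n → ZMod q) : ℤ :=
  ∑ i, (2 * ((v i).val : ℤ) * ((u i).val : ℤ) + ((v i).val : ℤ))

noncomputable def DD (q n : ℕ) [NeZero q] (f : (Fin n → ZMod q) → ZMod (2 * q))
    (v : Fin n → ZMod q) : ℂ :=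
  ∑ y : Fin n → ZMod q, omg q ^ (((f (y + v) - f y).val : ℤ)) *
      (-1 : ℂ) ^ (Finset.univ.filter (fun i => q ≤ (y i).val + (v i).val)).card

instance : NeZero (2 * q) := ⟨by have := NeZero.ne q; omega⟩

lemma val_sub_dvd (a b : ZMod (2 * q)) :
    (2 * q : ℤ) ∣ ((a.val : ℤ) - b.val - ((a - b).val : ℤ)) := by
  have := (ZMod.intCast_zmod_eq_zero_iff_dvd ((a.val : ℤ) - b.val - ((a - b).val : ℤ)) (2 * q)).1
  apply this
  push_cast [ZMod.natCast_val, ZMod.cast_id]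
  ring

lemma NHT_eq (n : ℕ) (f : (Fin n → ZMod q) → ZMod (2 * q)) (u : Fin n → ZMod q) :
    NHT q n f u = (Real.sqrt ((q : ℝ) ^ n) : ℂ)⁻¹ *
      ∑ x : Fin n → ZMod q, omg q ^ (((f x).val : ℤ) + chiP q n u x) := by
  rw [NHT]
  congr 1
  refine Finset.sum_congr rfl fun x _ => ?_
  have hchi : chiP q n u x = 2 * (∑ i, ((x i).val : ℤ) * ((u i).val : ℤ)) +
      ∑ i, ((x i).val : ℤ) := by
    rw [chiP, Finset.sum_add_distrib, Finset.mul_sum]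
    congr 1
    exact Finset.sum_congr rfl fun i _ => by ring
  rw [xiq_eq, ← pow_mul, ← pow_add, ← pow_add, ← zpow_natCast]
  congr 1
  push_cast
  rw [hchi]
  push_cast
  ring

lemma keylem (n : ℕ) (f : (Fin n → ZMod q) → ZMod (2 * q)) (u y v : Fin n → ZMod q) :
    omg q ^ (((f (y + v)).val : ℤ) + chiP q n u (y + v)) *
      (starRingEnd ℂ) (omg q ^ (((f y).val : ℤ) + chiP q n u y)) =
    (omg q ^ (((f (y + v) - f y).val : ℤ)) *
      (-1 : ℂ) ^ (Finset.univ.filter (fun i => q ≤ (y i).val + (v i).val)).card) *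
      omg q ^ (chiP q n u v) := by
  rw [conj_omg_zpow, ← zpow_add₀ (omg_ne_zero q)]
  set M : ℤ := ∑ i, (2 * ((u i).val : ℤ) + 1) *
    (if q ≤ (y i).val + (v i).val then 1 else 0) with hMdef
  set m' : ℤ := ∑ i, (if q ≤ (y i).val + (v i).val then (1:ℤ) else 0) with hm'def
  have hchi : chiP q n u (y + v) - chiP q n u y = chiP q n u v - q * M := by
    rw [chiP, chiP, chiP, hMdef, Finset.mul_sum, ← Finset.sum_sub_distrib,
      ← Finset.sum_sub_distrib]
    refine Finset.sum_congr rfl fun i _ => ?_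
    have happ : (y + v) i = y i + v i := rfl
    rw [happ, coord q (y i) (v i)]
    split_ifs <;> ring
  have hpar : (2 : ℤ) ∣ M - m' := by
    rw [hMdef, hm'def, ← Finset.sum_sub_distrib]
    refine Finset.dvd_sum fun i _ => ?_
    split_ifs <;> [skip; simp] <;> exact ⟨((u i).val : ℤ), by ring⟩
  have hdvd : (2 * q : ℤ) ∣
      ((((f (y + v)).val : ℤ) + chiP q n u (y + v)) + -(((f y).val : ℤ) + chiP q n u y)) -
      ((((f (y + v) - f y).val : ℤ) + chiP q n u v) + (-q) * m') := by
    have h1 := val_sub_dvd q (f (y + v)) (f y)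
    obtain ⟨k1, hk1⟩ := h1
    obtain ⟨k2, hk2⟩ := hpar
    exact ⟨k1 - k2, by linear_combination hk1 + hchi - (q:ℤ) * hk2⟩
  rw [omg_zpow_congr q hdvd, zpow_add₀ (omg_ne_zero q), zpow_add₀ (omg_ne_zero q),
    zpow_mul]
  have hq' : omg q ^ (-q : ℤ) = -1 := by
    rw [zpow_neg, omg_pow_q]; norm_num
  rw [hq']
  have hm'c : m' = ((Finset.univ.filter (fun i => q ≤ (y i).val + (v i).val)).card : ℤ) := by
    rw [hm'def, Finset.sum_boole]
  rw [hm'c, zpow_natCast (-1:ℂ)]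
  ring

lemma NHT_mul_conj (n : ℕ) (f : (Fin n → ZMod q) → ZMod (2 * q)) (u : Fin n → ZMod q) :
    NHT q n f u * (starRingEnd ℂ) (NHT q n f u) =
      ((q : ℂ) ^ n)⁻¹ * ∑ v : Fin n → ZMod q, DD q n f v * omg q ^ (chiP q n u v) := by
  rw [NHT_eq, map_mul, map_sum]
  have hs : (0:ℝ) ≤ (q:ℝ)^n := by positivity
  have hcc : (starRingEnd ℂ) ((Real.sqrt ((q : ℝ) ^ n) : ℂ))⁻¹ =
      ((Real.sqrt ((q : ℝ) ^ n) : ℂ))⁻¹ := by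
    rw [map_inv₀, Complex.conj_ofReal]
  rw [hcc]
  have hc2 : ((Real.sqrt ((q : ℝ) ^ n) : ℂ))⁻¹ * ((Real.sqrt ((q : ℝ) ^ n) : ℂ))⁻¹ =
      ((q : ℂ) ^ n)⁻¹ := by
    rw [← mul_inv, ← Complex.ofReal_mul, Real.mul_self_sqrt hs]
    push_cast
    ring
  calc ((Real.sqrt ((q : ℝ) ^ n) : ℂ))⁻¹ * (∑ x, omg q ^ (((f x).val : ℤ) + chiP q n u x)) *
        (((Real.sqrt ((q : ℝ) ^ n) : ℂ))⁻¹ *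
          ∑ y, (starRingEnd ℂ) (omg q ^ (((f y).val : ℤ) + chiP q n u y)))
      = ((q : ℂ) ^ n)⁻¹ * ((∑ x, omg q ^ (((f x).val : ℤ) + chiP q n u x)) *
          ∑ y, (starRingEnd ℂ) (omg q ^ (((f y).val : ℤ) + chiP q n u y))) := by
        rw [← hc2]; ring
    _ = ((q : ℂ) ^ n)⁻¹ * ∑ v, DD q n f v * omg q ^ (chiP q n u v) := by
        congr 1
        rw [Finset.sum_mul_sum]
        rw [Finset.sum_comm]
        have hre : ∀ y : Fin n → ZMod q,
            (∑ x, omg q ^ (((f x).val : ℤ) + chiP q n u x) *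
              (starRingEnd ℂ) (omg q ^ (((f y).val : ℤ) + chiP q n u y)))
            = ∑ v, omg q ^ (((f (y + v)).val : ℤ) + chiP q n u (y + v)) *
              (starRingEnd ℂ) (omg q ^ (((f y).val : ℤ) + chiP q n u y)) := by
          intro y
          exact (Fintype.sum_equiv (Equiv.addLeft y) _ _ (fun v => by simp)).symm
        rw [Finset.sum_congr rfl fun y _ => hre y, Finset.sum_comm]
        refine Finset.sum_congr rfl fun v _ => ?_
        rw [DD, Finset.sum_mul]
        exact Finset.sum_congr rfl fun y _ => keylem q n f u y v

lemma conj_negaCC (n : ℕ) (f : (Fin n → ZMod q) → ZMod (2 * q)) (v : Fin n → ZMod q) :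
    (starRingEnd ℂ) (negaCC q n f f v) = DD q n f v := by
  rw [negaCC, DD, map_sum]
  refine Finset.sum_congr rfl fun y _ => ?_
  rw [map_mul]
  have h1 : (starRingEnd ℂ) ((-1 : ℂ) ^ (Finset.univ.filter
      (fun i => q ≤ (y i).val + (v i).val)).card) =
      (-1 : ℂ) ^ (Finset.univ.filter (fun i => q ≤ (y i).val + (v i).val)).card := by
    rw [map_pow]; norm_num
  rw [h1]
  congr 1
  rw [← zpow_natCast (omg q), conj_omg_zpow]
  apply omg_zpow_congr
  have := (ZMod.intCast_zmod_eq_zero_iff_dvd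
    (-(((f y - f (y + v)).val : ℤ)) - (((f (y + v) - f y).val : ℤ))) (2 * q)).1
  apply this
  push_cast [ZMod.natCast_val, ZMod.cast_id]
  ring

lemma DD_zero (n : ℕ) (f : (Fin n → ZMod q) → ZMod (2 * q)) :
    DD q n f 0 = (q : ℂ) ^ n := by
  rw [DD]
  have h : ∀ y : Fin n → ZMod q,
      omg q ^ (((f (y + 0) - f y).val : ℤ)) *
        (-1 : ℂ) ^ (Finset.univ.filter (fun i => q ≤ (y i).val + ((0 : Fin n → ZMod q) i).val)).card
      = 1 := by
    intro y
    have h2 : (Finset.univ.filter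
        (fun i => q ≤ (y i).val + ((0 : Fin n → ZMod q) i).val)) = ∅ := by
      refine Finset.filter_eq_empty_iff.2 fun i _ => ?_
      have := ZMod.val_lt (y i)
      simp only [Pi.zero_apply, ZMod.val_zero]
      omega
    rw [h2, add_zero, sub_self, ZMod.val_zero]
    simp
  rw [Finset.sum_congr rfl fun y _ => h y, Finset.sum_const]
  simp [ZMod.card]

lemma orth (n : ℕ) (v w : Fin n → ZMod q) :
    ∑ u : Fin n → ZMod q, omg q ^ (chiP q n u v - chiP q n u w) =
      if v = w then (q : ℂ) ^ n else 0 := by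
  set d : Fin n → ℤ := fun i => ((v i).val : ℤ) - ((w i).val : ℤ) with hd
  have hsplit : ∀ u : Fin n → ZMod q,
      chiP q n u v - chiP q n u w = (∑ i, d i) + ∑ i, (2 * d i) * ((u i).val : ℤ) := by
    intro u
    rw [chiP, chiP, ← Finset.sum_sub_distrib, ← Finset.sum_add_distrib]
    refine Finset.sum_congr rfl fun i _ => ?_
    simp only [hd]; ring
  have hterm : ∀ u : Fin n → ZMod q,
      omg q ^ (chiP q n u v - chiP q n u w) =
        omg q ^ (∑ i, d i) * ∏ i, (omg q ^ (2 * d i)) ^ ((u i).val) := by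
    intro u
    rw [hsplit u, zpow_add₀ (omg_ne_zero q),
      zpow_sum Finset.univ (omg q) (omg_ne_zero q) (fun i => 2 * d i * ((u i).val : ℤ))]
    congr 1
    exact Fintype.prod_congr _ _ fun i => by
      rw [← zpow_natCast (omg q ^ (2 * d i)), ← zpow_mul]
  simp only [hterm]
  rw [← Finset.mul_sum]
  have hprod : (∑ u : Fin n → ZMod q, ∏ i, (omg q ^ (2 * d i)) ^ ((u i).val)) =
      ∏ i, ∑ k : ZMod q, (omg q ^ (2 * d i)) ^ (k.val) := by
    rw [Finset.prod_univ_sum]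
    rw [Fintype.piFinset_univ]
  rw [hprod]
  have hζq : ∀ i, (omg q ^ (2 * d i)) ^ q = 1 := by
    intro i
    rw [← zpow_natCast, ← zpow_mul]
    apply (omg_zpow_eq_one_iff q _).2
    exact ⟨d i, by ring⟩
  have hone : ∀ i, (omg q ^ (2 * d i) = 1) ↔ v i = w i := by
    intro i
    rw [omg_two_d_eq_one_iff q (d i) (by
      have h1 := ZMod.val_lt (v i); have h2 := ZMod.val_lt (w i)
      simp only [hd]; omega)]
    constructor
    · intro h
      have : (v i).val = (w i).val := by simp only [hd] at h; omega
      exact ZMod.val_injective q this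
    · intro h; simp [hd, h]
  rw [Finset.prod_congr rfl fun i _ => sum_val_pow q _ (hζq i)]
  by_cases hvw : v = w
  · subst hvw
    have : ∀ i ∈ (Finset.univ : Finset (Fin n)), (if omg q ^ (2 * d i) = 1 then (q:ℂ) else 0) = q := by
      intro i _; rw [if_pos ((hone i).2 rfl)]
    rw [Finset.prod_congr rfl this, if_pos rfl, Finset.prod_const]
    have hsum0 : (∑ i, d i) = 0 := by
      refine Finset.sum_eq_zero fun i _ => ?_
      simp [hd]
    rw [hsum0, zpow_zero, one_mul]
    simp
  · rw [if_neg hvw]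
    obtain ⟨i, hi⟩ := Function.ne_iff.1 hvw
    have : (if omg q ^ (2 * d i) = 1 then (q:ℂ) else 0) = 0 := by
      rw [if_neg]; intro h; exact hi ((hone i).1 h)
    rw [Finset.prod_eq_zero (Finset.mem_univ i) this, mul_zero]

theorem main_thm (n : ℕ) (hq : 2 ≤ q) (hn : 1 ≤ n)
    (f g : (Fin n → ZMod q) → ZMod (2 * q)) :
    (∀ u : Fin n → ZMod q, u ≠ 0 → negaCC q n f f u + negaCC q n g g u = 0) ↔
      (∀ u : Fin n → ZMod q,
        ‖NHT q n f u‖ ^ 2 + ‖NHT q n g u‖ ^ 2 = 2) := by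
  have hqn : ((q:ℂ)^n) ≠ 0 := pow_ne_zero _ (qC_ne_zero q)
  set S : (Fin n → ZMod q) → ℂ := fun v => DD q n f v + DD q n g v with hSdef
  have habs : ∀ z w : ℂ,
      (‖z‖ ^ 2 + ‖w‖ ^ 2 = 2) ↔
        z * (starRingEnd ℂ) z + w * (starRingEnd ℂ) w = 2 := by
    intro z w
    rw [Complex.mul_conj, Complex.mul_conj, ← Complex.ofReal_add, ← Complex.sq_norm z,
      ← Complex.sq_norm w]
    constructor
    · intro h; rw [h]; norm_num
    · intro h; exact_mod_cast h
  have hNC : ∀ u : Fin n → ZMod q,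
      NHT q n f u * (starRingEnd ℂ) (NHT q n f u) +
        NHT q n g u * (starRingEnd ℂ) (NHT q n g u) =
      ((q:ℂ)^n)⁻¹ * ∑ v, S v * omg q ^ (chiP q n u v) := by
    intro u
    rw [NHT_mul_conj, NHT_mul_conj, ← mul_add, hSdef]
    congr 1
    rw [← Finset.sum_add_distrib]
    exact Finset.sum_congr rfl fun v _ => by ring
  have hchi0 : ∀ u : Fin n → ZMod q, chiP q n u (0 : Fin n → ZMod q) = 0 := fun u => by
    simp [chiP]
  constructor
  · intro h u
    have hSv : ∀ v : Fin n → ZMod q, v ≠ 0 → S v = 0 := by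
      intro v hv
      have h2 := congrArg (starRingEnd ℂ) (h v hv)
      rw [map_add, conj_negaCC, conj_negaCC, map_zero] at h2
      exact h2
    rw [habs, hNC u]
    have hsum : (∑ v, S v * omg q ^ (chiP q n u v)) = S 0 * omg q ^ (chiP q n u 0) := by
      refine Finset.sum_eq_single_of_mem 0 (Finset.mem_univ _) fun v _ hv => ?_
      rw [hSv v hv, zero_mul]
    rw [hsum, hchi0 u, zpow_zero, mul_one, hSdef]
    simp only
    rw [DD_zero, DD_zero]
    field_simp
    ring
  · intro h w hw
    have hU : ∀ u : Fin n → ZMod q,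
        (∑ v, S v * omg q ^ (chiP q n u v)) = 2 * (q:ℂ)^n := by
      intro u
      have h2 := (habs _ _).1 (h u)
      rw [hNC u] at h2
      field_simp at h2
      linear_combination h2
    have hR : ∀ u : Fin n → ZMod q,
        ∑ v, S v * omg q ^ (chiP q n u v - chiP q n u w) =
          2 * (q:ℂ)^n * omg q ^ (-(chiP q n u w)) := by
      intro u
      have hterm : ∀ v, S v * omg q ^ (chiP q n u v - chiP q n u w) =
          (S v * omg q ^ (chiP q n u v)) * omg q ^ (-(chiP q n u w)) := by
        intro v
        rw [sub_eq_add_neg, zpow_add₀ (omg_ne_zero q)]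
        ring
      rw [Finset.sum_congr rfl fun v _ => hterm v, ← Finset.sum_mul, hU u]
    have hzero : ∑ u : Fin n → ZMod q, omg q ^ (-(chiP q n u w)) = 0 := by
      have horth := orth q n 0 w
      rw [if_neg (fun h0 => hw h0.symm)] at horth
      rw [← horth]
      exact Fintype.sum_congr _ _ fun u => by rw [hchi0 u, zero_sub]
    have hL : ∑ u : Fin n → ZMod q, ∑ v, S v * omg q ^ (chiP q n u v - chiP q n u w) =
        (q:ℂ)^n * S w := by
      rw [Finset.sum_comm]
      have hinner : ∀ v, ∑ u : Fin n → ZMod q, S v * omg q ^ (chiP q n u v - chiP q n u w)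
          = if v = w then S v * (q:ℂ)^n else 0 := by
        intro v
        rw [← Finset.mul_sum, orth]
        split_ifs <;> simp
      rw [Finset.sum_congr rfl fun v _ => hinner v, Finset.sum_ite_eq' Finset.univ w]
      rw [if_pos (Finset.mem_univ _)]
      ring
    have hSw : S w = 0 := by
      have e1 : (q:ℂ)^n * S w = 0 := by
        rw [← hL, Finset.sum_congr rfl fun u _ => hR u, ← Finset.mul_sum, hzero, mul_zero]
      exact (mul_eq_zero.1 e1).resolve_left hqn
    have hconj : (starRingEnd ℂ) (negaCC q n f f w + negaCC q n g g w) = 0 := by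
      rw [map_add, conj_negaCC, conj_negaCC]
      exact hSw
    calc negaCC q n f f w + negaCC q n g g w
        = (starRingEnd ℂ) ((starRingEnd ℂ) (negaCC q n f f w + negaCC q n g g w)) :=
          (Complex.conj_conj _).symm
      _ = 0 := by rw [hconj, map_zero]


end Aux

/-- `f` and `g` have complementary `2q`-nega-autocorrelation
(`C_f(u) + C_g(u) = 0` for all nonzero `u`) iff `|N_f(u)|² + |N_g(u)|² = 2` for all `u`. -/
theorem complementary_negaAC_iff (q n : ℕ) [NeZero q] (hq : 2 ≤ q) (hn : 1 ≤ n)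
    (f g : (Fin n → ZMod q) → ZMod (2 * q)) :
    (∀ u : Fin n → ZMod q, u ≠ 0 → negaCC q n f f u + negaCC q n g g u = 0) ↔
      (∀ u : Fin n → ZMod q,
        ‖NHT q n f u‖ ^ 2 + ‖NHT q n g u‖ ^ 2 = 2) :=
  main_thm q n hq hn f g
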